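/- Suppose P ∈ 𝒫 with density p. Define the tilted density p̃(x) ∝ p(x) / (1 + ‖x‖₂²)^{1/2}, which is normalizable, and let P̃ be the associated probability distribution with score function b̃(x) = ∇ log p̃(x) = b(x) − x/(1 + ‖x‖₂²). Then b̃ is Lipschitz and P̃ is distantly dissipative; that is, P̃ ∈ 𝒫. -/

import Mathlib

open MeasureTheory Filter Real
open scoped BigOperators RealInnerProductSpace FourierTransform ENNReal

noncomputable section

/-- `E d` is the Euclidean space `ℝ^d`. -/
abbrev E (d : ℕ) : Type := EuclideanSpace ℝ (Fin d)

/-- The `j`-th standard basis vector of `ℝ^d`. -/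
def esingle (d : ℕ) (j : Fin d) : E d := EuclideanSpace.single j (1 : ℝ)

/-- Partial derivative in the `j`-th coordinate of the first argument of a bivariate kernel. -/
def Dx {d : ℕ} (j : Fin d) (k : E d → E d → ℝ) : E d → E d → ℝ :=
  fun x y => fderiv ℝ (fun z => k z y) x (esingle d j)

/-- Partial derivative in the `j`-th coordinate of the second argument of a bivariate kernel. -/
def Dy {d : ℕ} (j : Fin d) (k : E d → E d → ℝ) : E d → E d → ℝ :=
  fun x y => fderiv ℝ (fun z => k x z) y (esingle d j)

/-- A reproducing kernel Hilbert space of real-valued functions on `ℝ^d`, presented via its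
membership predicate, inner product and reproducing kernel. -/
structure RKHS' (d : ℕ) where
  mem : (E d → ℝ) → Prop
  inner : (E d → ℝ) → (E d → ℝ) → ℝ
  kernel : E d → E d → ℝ
  mem_zero : mem 0
  mem_add : ∀ f g, mem f → mem g → mem (f + g)
  mem_smul : ∀ (c : ℝ) f, mem f → mem (c • f)
  inner_symm : ∀ f g, inner f g = inner g f
  inner_add_left : ∀ f g h, inner (f + g) h = inner f h + inner g h
  inner_smul_left : ∀ (c : ℝ) f g, inner (c • f) g = c * inner f g
  inner_self_nonneg : ∀ f, 0 ≤ inner f f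
  inner_self_eq_zero : ∀ f, mem f → inner f f = 0 → f = 0
  kernel_mem : ∀ x, mem (kernel x)
  reproducing : ∀ f, mem f → ∀ x, f x = inner f (kernel x)

/-- The RKHS norm. -/
def RKHS'.norm {d : ℕ} (H : RKHS' d) (f : E d → ℝ) : ℝ := Real.sqrt (H.inner f f)

/-- The Langevin Stein operator `(T_P g)(x) = ⟨g(x), b(x)⟩ + ∑_j ∂_{x_j} g_j(x)`, applied to a
function given by its components `g : Fin d → E d → ℝ`. -/
def TP {d : ℕ} (b : E d → E d) (g : Fin d → E d → ℝ) (x : E d) : ℝ :=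
  (∑ j, g j x * b x j) + ∑ j, fderiv ℝ (g j) x (esingle d j)

/-- The Langevin Stein operator applied to a vector field `g : ℝ^d → ℝ^d`. -/
def TPv {d : ℕ} (b : E d → E d) (g : E d → E d) (x : E d) : ℝ :=
  ⟪g x, b x⟫ + ∑ j, fderiv ℝ (fun z => g z j) x (esingle d j)

/-- The kernel Stein set `G_k` for the Euclidean (`ℓ²`) norm. -/
def SteinSet {d : ℕ} (H : RKHS' d) : Set (Fin d → E d → ℝ) :=
  {g | (∀ j, H.mem (g j)) ∧ (∑ j, (H.norm (g j)) ^ 2) ≤ 1}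

/-- The kernel Stein discrepancy `S(μ) = sup_{g ∈ G_k} |E_μ[(T_P g)(X)]|`. -/
def KSD {d : ℕ} (H : RKHS' d) (b : E d → E d) (μ : Measure (E d)) : ℝ :=
  ⨆ g : SteinSet H, |∫ x, TP b g.1 x ∂μ|

/-- The dual norm `‖v‖* = sup_{N(a) = 1} ⟨a, v⟩` of a norm `N` on `ℝ^d`. -/
def dualNorm {d : ℕ} (N : E d → ℝ) (v : E d) : ℝ :=
  sSup {s | ∃ a : E d, N a = 1 ∧ s = ⟪v, a⟫}

/-- `N` is a norm on `ℝ^d`. -/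
def IsNorm {d : ℕ} (N : E d → ℝ) : Prop :=
  (∀ x, 0 ≤ N x) ∧ (∀ x, N x = 0 ↔ x = 0) ∧
    (∀ x y, N (x + y) ≤ N x + N y) ∧ ∀ (c : ℝ) x, N (c • x) = |c| * N x

/-- The kernel Stein set `G_{k, ‖·‖}` for a general norm `N` on `ℝ^d`. -/
def SteinSetN {d : ℕ} (H : RKHS' d) (N : E d → ℝ) : Set (Fin d → E d → ℝ) :=
  {g | (∀ j, H.mem (g j)) ∧ dualNorm N (WithLp.toLp 2 (fun j => H.norm (g j))) ≤ 1}

/-- The kernel Stein discrepancy based on the Stein set `G_{k, ‖·‖}`. -/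
def KSDN {d : ℕ} (H : RKHS' d) (N : E d → ℝ) (b : E d → E d) (μ : Measure (E d)) : ℝ :=
  ⨆ g : SteinSetN H N, |∫ x, TP b g.1 x ∂μ|

/-- The Stein kernel
`k_0^j(x,y) = b_j(x)b_j(y)k(x,y) + b_j(x)∂_{y_j}k(x,y) + b_j(y)∂_{x_j}k(x,y) + ∂_{x_j}∂_{y_j}k(x,y)`. -/
def steinKernel {d : ℕ} (b : E d → E d) (k : E d → E d → ℝ) (j : Fin d) (x y : E d) : ℝ :=
  b x j * b y j * k x y + b x j * Dy j k x y + b y j * Dx j k x y + Dx j (Dy j k) x y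

/-- `k ∈ C^{(1,1)}`: `k` and all mixed partials `∂_{x_i}∂_{y_j} k` are continuous. -/
def C11 {d : ℕ} (k : E d → E d → ℝ) : Prop :=
  Continuous (fun q : E d × E d => k q.1 q.2) ∧
    ∀ i j : Fin d, Continuous fun q : E d × E d => Dx i (Dy j k) q.1 q.2

/-- `k ∈ C_b^{(1,1)}`: `k` and all mixed partials `∂_{x_i}∂_{y_j} k` are continuous and bounded. -/
def Cb11 {d : ℕ} (k : E d → E d → ℝ) : Prop :=
  C11 k ∧ (∃ C, ∀ x y, |k x y| ≤ C) ∧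
    ∀ i j : Fin d, ∃ C, ∀ x y, |Dx i (Dy j k) x y| ≤ C

/-- `k ∈ C_b^{(2,2)}`. -/
def Cb22 {d : ℕ} (k : E d → E d → ℝ) : Prop :=
  Cb11 k ∧ ∀ i₁ i₂ j₁ j₂ : Fin d,
    Continuous (fun q : E d × E d => Dx i₁ (Dx i₂ (Dy j₁ (Dy j₂ k))) q.1 q.2) ∧
      ∃ C, ∀ x y, |Dx i₁ (Dx i₂ (Dy j₁ (Dy j₂ k))) x y| ≤ C

/-- `k ∈ C_0^{(1,1)}`: `k` and all mixed partials are continuous and vanishing at infinity. -/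
def C011 {d : ℕ} (k : E d → E d → ℝ) : Prop :=
  C11 k ∧ Tendsto (fun q : E d × E d => k q.1 q.2) (cocompact _) (nhds 0) ∧
    ∀ i j : Fin d, Tendsto (fun q : E d × E d => Dx i (Dy j k) q.1 q.2) (cocompact _) (nhds 0)

/-- The score function `b = ∇ log p`. -/
def score {d : ℕ} (p : E d → ℝ) : E d → E d := fun x => gradient (fun z => Real.log (p z)) x

/-- `κ(r) = inf { -2⟨b(x)-b(y), x-y⟩/‖x-y‖² : ‖x-y‖ = r }`. -/
def kappaFn {d : ℕ} (b : E d → E d) (r : ℝ) : ℝ :=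
  sInf {s | ∃ x y : E d, ‖x - y‖ = r ∧ s = -2 * ⟪b x - b y, x - y⟫ / ‖x - y‖ ^ 2}

/-- Distant dissipativity: `κ_0 = liminf_{r → ∞} κ(r) > 0`. -/
def DistantlyDissipative {d : ℕ} (b : E d → E d) : Prop :=
  0 < liminf (fun r => kappaFn b r) atTop

/-- `f` is Lipschitz. -/
def LipschitzFn {d : ℕ} {α : Type*} [NormedAddCommGroup α] (f : E d → α) : Prop :=
  ∃ L : ℝ, 0 ≤ L ∧ ∀ x y, ‖f x - f y‖ ≤ L * ‖x - y‖

/-- Membership of a target (given by its score `b`) in the class `𝒫` of distantly dissipative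
distributions with Lipschitz score. -/
def InP {d : ℕ} (b : E d → E d) : Prop := DistantlyDissipative b ∧ LipschitzFn b

/-- Weak convergence of a sequence of measures to `P`. -/
def WeakConvTo {d : ℕ} (μ : ℕ → Measure (E d)) (P : Measure (E d)) : Prop :=
  ∀ f : BoundedContinuousFunction (E d) ℝ,
    Tendsto (fun m => ∫ x, f x ∂μ m) atTop (nhds (∫ x, f x ∂P))

/-- Uniform tightness of a sequence of measures. -/
def UnifTight {d : ℕ} (μ : ℕ → Measure (E d)) : Prop :=
  ∀ ε : ℝ, 0 < ε → ∃ R : ℝ, limsup (fun m => μ m {x | R < ‖x‖}) atTop ≤ ENNReal.ofReal ε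

/-- `M_0(f) = sup_x ‖f(x)‖`. -/
def M0 {d : ℕ} {α : Type*} [NormedAddCommGroup α] (f : E d → α) : ℝ :=
  sSup {s | ∃ x, s = ‖f x‖}

/-- `M_1(f) = sup_{x ≠ y} ‖f(x) - f(y)‖/‖x - y‖`. -/
def M1 {d : ℕ} {α : Type*} [NormedAddCommGroup α] (f : E d → α) : ℝ :=
  sSup {s | ∃ x y, x ≠ y ∧ s = ‖f x - f y‖ / ‖x - y‖}

/-- `M_2(g) = sup_{x ≠ y} ‖∇g(x) - ∇g(y)‖_op/‖x - y‖`. -/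
def M2 {d : ℕ} (g : E d → E d) : ℝ :=
  sSup {s | ∃ x y, x ≠ y ∧ s = ‖fderiv ℝ g x - fderiv ℝ g y‖ / ‖x - y‖}

/-- The L¹-Wasserstein distance, via couplings. -/
def Wass {d : ℕ} (μ ν : Measure (E d)) : ℝ :=
  sInf {s | ∃ Pi : Measure (E d × E d),
    Pi.map Prod.fst = μ ∧ Pi.map Prod.snd = ν ∧ s = ∫ q, ‖q.1 - q.2‖ ∂Pi}

/-- The bounded Lipschitz (Dudley) metric. -/
def dBL {d : ℕ} (μ ν : Measure (E d)) : ℝ :=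
  sSup {s | ∃ h : E d → ℝ, M0 h + M1 h ≤ 1 ∧ s = |(∫ x, h x ∂μ) - ∫ x, h x ∂ν|}

/-- The tightness rate `R(μ, ε) = inf { r ≥ 0 : μ(‖X‖ > r) ≤ ε }`. -/
def tightRate {d : ℕ} (μ : Measure (E d)) (ε : ℝ) : ℝ :=
  sInf {r | 0 ≤ r ∧ μ {x | r < ‖x‖} ≤ ENNReal.ofReal ε}

/-- `θ_d = d ∫_0^1 exp(-1/(1-r²)) r^{d-1} dr` for `d > 0`, and `θ_0 = e⁻¹`. -/
def theta (d : ℕ) : ℝ :=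
  if d = 0 then Real.exp (-1)
  else d * ∫ r in (0:ℝ)..1, Real.exp (-1 / (1 - r ^ 2)) * r ^ (d - 1)

/-- The volume of the unit Euclidean ball in `ℝ^d`. -/
def Vball (d : ℕ) : ℝ := (volume (Metric.ball (0 : E d) 1)).toReal

/-- `Φhat` is a generalized Fourier transform of `Φ` of order `m`: for every Schwartz test
function `γ` whose derivatives of order `< 2m` vanish at the origin,
`∫ Φ(x) γ̂(x) dx = ∫ Φhat(ω) γ(ω) dω`. -/
def IsGenFT {d : ℕ} (m : ℕ) (Φ Φhat : E d → ℝ) : Prop :=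
  ∀ γ : SchwartzMap (E d) ℂ, (∀ n : ℕ, n < 2 * m → iteratedFDeriv ℝ n (⇑γ) 0 = 0) →
    ∫ x, (Φ x : ℂ) * 𝓕 (⇑γ) x = ∫ ω, (Φhat ω : ℂ) * γ ω

/-- `F(t) = sup_{‖ω‖_∞ ≤ t} Φhat(ω)⁻¹`. -/
def Fsup {d : ℕ} (Φhat : E d → ℝ) (t : ℝ) : ℝ :=
  sSup {s | ∃ ω : E d, (∀ j, |ω j| ≤ t) ∧ s = (Φhat ω)⁻¹}

/-- The standard Gaussian density on `ℝ^d`. -/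
def gaussDensity (d : ℕ) : E d → ℝ := fun x => (2 * π) ^ (-(d : ℝ) / 2) * Real.exp (-‖x‖ ^ 2 / 2)

/-- The standard Gaussian measure `N(0, I_d)` on `ℝ^d`. -/
def stdGaussian (d : ℕ) : Measure (E d) :=
  volume.withDensity fun x => ENNReal.ofReal (gaussDensity d x)

/-- `‖∇_x k(x,y)‖₂`. -/
def gradX {d : ℕ} (k : E d → E d → ℝ) (x y : E d) : ℝ := Real.sqrt (∑ i, (Dx i k x y) ^ 2)

/-- `⟨∇_x, ∇_y k(x,y)⟩ = ∑_i ∂_{x_i}∂_{y_i} k(x,y)`. -/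
def mixedTrace {d : ℕ} (k : E d → E d → ℝ) (x y : E d) : ℝ := ∑ i, Dx i (Dy i k) x y

/-- Kernel decay rate
`γ(r) = sup { max(|k(x,y)|, ‖∇_x k(x,y)‖₂, |⟨∇_x, ∇_y k(x,y)⟩|) : ‖x-y‖₂ ≥ r }`. -/
def decayRate {d : ℕ} (k : E d → E d → ℝ) (r : ℝ) : ℝ :=
  sSup {s | ∃ x y : E d, r ≤ ‖x - y‖ ∧ s = max |k x y| (max (gradX k x y) |mixedTrace k x y|)}

/-- The Stein discrepancy over an arbitrary family `G` of vector fields. -/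
def SDisc {d : ℕ} (b : E d → E d) (G : Set (E d → E d)) (μ : Measure (E d)) : ℝ :=
  ⨆ g : G, |∫ x, TPv b g.1 x ∂μ|
lemma phi_norm_le {d : ℕ} (x : E d) : ‖(1 + ‖x‖ ^ 2)⁻¹ • x‖ ≤ 1 / 2 := by
  rw [norm_smul]
  have h : (0:ℝ) < 1 + ‖x‖ ^ 2 := by positivity
  rw [norm_inv, Real.norm_eq_abs, abs_of_pos h, inv_mul_le_iff₀ h]
  nlinarith [norm_nonneg x, sq_nonneg (‖x‖ - 1)]

lemma phi_lip {d : ℕ} (x y : E d) :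
    ‖(1 + ‖x‖ ^ 2)⁻¹ • x - (1 + ‖y‖ ^ 2)⁻¹ • y‖ ≤ 3 * ‖x - y‖ := by
  set a : ℝ := 1 + ‖x‖ ^ 2 with ha'
  set c : ℝ := 1 + ‖y‖ ^ 2 with hc'
  have ha : (0:ℝ) < a := by positivity
  have hc : (0:ℝ) < c := by positivity
  have key : a⁻¹ • x - c⁻¹ • y = a⁻¹ • (x - y) + (a⁻¹ - c⁻¹) • y := by
    rw [smul_sub, sub_smul]; abel
  rw [key]
  refine (norm_add_le _ _).trans ?_
  rw [norm_smul, norm_smul, norm_inv, Real.norm_eq_abs, abs_of_pos ha, Real.norm_eq_abs]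
  have h1 : |a⁻¹ - c⁻¹| = |c - a| / (a * c) := by
    have h0 : a⁻¹ - c⁻¹ = (c - a) / (a * c) := by field_simp
    rw [h0, abs_div, abs_of_pos (by positivity : (0:ℝ) < a * c)]
  have h2 : |c - a| ≤ (‖x‖ + ‖y‖) * ‖x - y‖ := by
    have hca : c - a = (‖y‖ - ‖x‖) * (‖y‖ + ‖x‖) := by rw [ha', hc']; ring
    rw [hca, abs_mul, abs_of_nonneg (by positivity : (0:ℝ) ≤ ‖y‖ + ‖x‖)]
    have h3 : |‖y‖ - ‖x‖| ≤ ‖x - y‖ := by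
      rw [← norm_sub_rev]; exact abs_norm_sub_norm_le y x
    nlinarith [norm_nonneg x, norm_nonneg y]
  have hterm1 : a⁻¹ * ‖x - y‖ ≤ ‖x - y‖ := by
    have : a⁻¹ ≤ 1 := by
      rw [inv_le_one_iff₀]; right; nlinarith [norm_nonneg x]
    nlinarith [norm_nonneg (x - y)]
  have hterm2 : |a⁻¹ - c⁻¹| * ‖y‖ ≤ 2 * ‖x - y‖ := by
    rw [h1, div_mul_eq_mul_div, div_le_iff₀ (by positivity)]
    have hxa : ‖x‖ ≤ a := by rw [ha']; nlinarith [norm_nonneg x]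
    have hyc : ‖y‖ ≤ c := by rw [hc']; nlinarith [norm_nonneg y]
    have huv : ‖x‖ * ‖y‖ ≤ a * c := mul_le_mul hxa hyc (norm_nonneg y) ha.le
    have hv2 : ‖y‖ ^ 2 ≤ a * c := by nlinarith [norm_nonneg y, norm_nonneg x]
    have hkey : |c - a| * ‖y‖ ≤ (‖x‖ * ‖y‖ + ‖y‖ ^ 2) * ‖x - y‖ := by
      nlinarith [mul_le_mul_of_nonneg_right h2 (norm_nonneg y), norm_nonneg (x - y), norm_nonneg y]
    nlinarith [mul_le_mul_of_nonneg_right (add_le_add huv hv2) (norm_nonneg (x - y))]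
  linarith

lemma elt_abs_bound {d : ℕ} {b' : E d → E d} {L' : ℝ} (hL : 0 ≤ L')
    (hlip : ∀ x y, ‖b' x - b' y‖ ≤ L' * ‖x - y‖) (x y : E d) :
    |(-2 * ⟪b' x - b' y, x - y⟫ / ‖x - y‖ ^ 2)| ≤ 2 * L' := by
  rcases eq_or_ne x y with rfl | hxy
  · simp; positivity
  · have hw : (0:ℝ) < ‖x - y‖ := by rwa [norm_pos_iff, sub_ne_zero]
    have hcs : |⟪b' x - b' y, x - y⟫| ≤ L' * ‖x - y‖ ^ 2 := by
      calc |⟪b' x - b' y, x - y⟫| ≤ ‖b' x - b' y‖ * ‖x - y‖ := abs_real_inner_le_norm _ _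
        _ ≤ (L' * ‖x - y‖) * ‖x - y‖ :=
            mul_le_mul_of_nonneg_right (hlip x y) (norm_nonneg _)
        _ = L' * ‖x - y‖ ^ 2 := by ring
    rw [abs_div, abs_of_pos (by positivity : (0:ℝ) < ‖x - y‖ ^ 2),
      div_le_iff₀ (by positivity : (0:ℝ) < ‖x - y‖ ^ 2), abs_mul]
    have : |(-2 : ℝ)| = 2 := by norm_num
    rw [this]
    nlinarith [hcs, sq_nonneg ‖x - y‖]

lemma kappa_abs_bound {d : ℕ} {b' : E d → E d} {L' : ℝ} (hL : 0 ≤ L')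
    (hlip : ∀ x y, ‖b' x - b' y‖ ≤ L' * ‖x - y‖) (r : ℝ) :
    |kappaFn b' r| ≤ 2 * L' := by
  rw [kappaFn]
  set S := {s | ∃ x y : E d, ‖x - y‖ = r ∧ s = -2 * ⟪b' x - b' y, x - y⟫ / ‖x - y‖ ^ 2} with hS
  have hmem : ∀ s ∈ S, -(2 * L') ≤ s ∧ s ≤ 2 * L' := by
    rintro s ⟨x, y, -, rfl⟩
    exact abs_le.mp (elt_abs_bound hL hlip x y)
  rcases S.eq_empty_or_nonempty with h | h
  · rw [h, Real.sInf_empty, abs_zero]; positivity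
  · rw [abs_le]
    obtain ⟨s0, hs0⟩ := h
    exact ⟨le_csInf ⟨s0, hs0⟩ fun s hs => (hmem s hs).1,
      csInf_le_of_le ⟨-(2 * L'), fun s hs => (hmem s hs).1⟩ hs0 (hmem s0 hs0).2⟩

lemma kappa_compare {d : ℕ} {b : E d → E d} {L : ℝ} (hL : 0 ≤ L)
    (hlip : ∀ x y, ‖b x - b y‖ ≤ L * ‖x - y‖) {r : ℝ} (hr : 0 < r) :
    kappaFn b r - 2 / r ≤ kappaFn (fun x => b x - (1 + ‖x‖ ^ 2)⁻¹ • x) r := by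
  by_cases hex : ∃ x y : E d, ‖x - y‖ = r
  · obtain ⟨x0, y0, hxy0⟩ := hex
    rw [kappaFn]
    refine le_csInf ⟨_, x0, y0, hxy0, rfl⟩ ?_
    rintro s ⟨x, y, hxy, rfl⟩
    have hw : (0:ℝ) < ‖x - y‖ := hxy ▸ hr
    set φ : E d → E d := fun z => (1 + ‖z‖ ^ 2)⁻¹ • z with hφ
    have hsplit : (b x - φ x) - (b y - φ y) = (b x - b y) - (φ x - φ y) := by abel
    have hs : -2 * ⟪(b x - φ x) - (b y - φ y), x - y⟫ / ‖x - y‖ ^ 2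
        = -2 * ⟪b x - b y, x - y⟫ / ‖x - y‖ ^ 2 + 2 * ⟪φ x - φ y, x - y⟫ / ‖x - y‖ ^ 2 := by
      rw [hsplit, inner_sub_left]; ring
    have hA : kappaFn b r ≤ -2 * ⟪b x - b y, x - y⟫ / ‖x - y‖ ^ 2 := by
      refine csInf_le ⟨-(2 * L), ?_⟩ ⟨x, y, hxy, rfl⟩
      rintro s ⟨u, v, -, rfl⟩
      exact (abs_le.mp (elt_abs_bound hL hlip u v)).1
    have hφd : ‖φ x - φ y‖ ≤ 1 := by
      refine (norm_sub_le _ _).trans ?_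
      have := phi_norm_le x
      have := phi_norm_le y
      rw [hφ]; dsimp only; linarith
    have hB : -(2 / r) ≤ 2 * ⟪φ x - φ y, x - y⟫ / ‖x - y‖ ^ 2 := by
      have hin : |⟪φ x - φ y, x - y⟫| ≤ ‖x - y‖ :=
        (abs_real_inner_le_norm _ _).trans (by nlinarith [norm_nonneg (x - y)])
      rw [hxy] at *
      rw [neg_le, ← neg_div, div_le_div_iff₀ (by positivity) hr]
      have := (abs_le.mp hin).1
      nlinarith
    calc kappaFn b r - 2 / r
        ≤ -2 * ⟪b x - b y, x - y⟫ / ‖x - y‖ ^ 2 + 2 * ⟪φ x - φ y, x - y⟫ / ‖x - y‖ ^ 2 := by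
          have := hB; linarith
      _ = _ := hs.symm
  · have hempty : ∀ b' : E d → E d, kappaFn b' r = 0 := by
      intro b'
      rw [kappaFn]
      convert Real.sInf_empty using 2
      rw [Set.eq_empty_iff_forall_notMem]
      rintro s ⟨x, y, hxy, -⟩
      exact hex ⟨x, y, hxy⟩
    rw [hempty, hempty]
    have : 0 < 2 / r := by positivity
    linarith


/-- The tilted distribution remains in `𝒫`. If `P ∈ 𝒫` with density `p`,
then `p̃(x) ∝ p(x)/(1 + ‖x‖₂²)^{1/2}` is normalizable, its score is
`b̃(x) = b(x) − x/(1 + ‖x‖₂²)`, `b̃` is Lipschitz, and `P̃` is distantly dissipative;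
that is, `P̃ ∈ 𝒫`. -/
theorem tilted_distribution_in_P {d : ℕ}
    (p : E d → ℝ) (hp_pos : ∀ x, 0 < p x) (hp_C1 : ContDiff ℝ 1 p)
    (P : Measure (E d)) [IsProbabilityMeasure P]
    (hP : P = volume.withDensity fun x => ENNReal.ofReal (p x))
    (hPP : InP (score p)) :
    Integrable (fun x => p x / Real.sqrt (1 + ‖x‖ ^ 2)) volume ∧
      (0 < ∫ x, p x / Real.sqrt (1 + ‖x‖ ^ 2)) ∧
      (∀ x, gradient (fun z => Real.log (p z / Real.sqrt (1 + ‖z‖ ^ 2))) x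
          = score p x - (1 + ‖x‖ ^ 2)⁻¹ • x) ∧
      LipschitzFn (fun x => score p x - (1 + ‖x‖ ^ 2)⁻¹ • x) ∧
      DistantlyDissipative (fun x => score p x - (1 + ‖x‖ ^ 2)⁻¹ • x) := by
    classical
  -- continuity facts
  have hp_cont : Continuous p := hp_C1.continuous
  have hsqrt_cont : Continuous fun x : E d => Real.sqrt (1 + ‖x‖ ^ 2) :=
    Real.continuous_sqrt.comp (continuous_const.add (continuous_norm.pow 2))
  have hsqrt_pos : ∀ x : E d, 0 < Real.sqrt (1 + ‖x‖ ^ 2) := fun x =>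
    Real.sqrt_pos.mpr (by positivity)
  have hsqrt_ge : ∀ x : E d, 1 ≤ Real.sqrt (1 + ‖x‖ ^ 2) := fun x => by
    nlinarith [Real.sq_sqrt (show (0:ℝ) ≤ 1 + ‖x‖ ^ 2 by positivity),
      Real.sqrt_nonneg (1 + ‖x‖ ^ 2), sq_nonneg ‖x‖]
  -- integrability
  have hlint : (∫⁻ x, ENNReal.ofReal (p x)) = 1 := by
    have h := measure_univ (μ := P)
    rw [hP, withDensity_apply _ MeasurableSet.univ, setLIntegral_univ] at h
    exact h
  have hint_p : Integrable p volume := by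
    refine ⟨hp_cont.aestronglyMeasurable, ?_⟩
    rw [hasFiniteIntegral_iff_norm]
    have : ∀ x : E d, ENNReal.ofReal ‖p x‖ = ENNReal.ofReal (p x) := fun x => by
      rw [Real.norm_eq_abs, abs_of_pos (hp_pos x)]
    simp only [this, hlint]
    exact ENNReal.one_lt_top
  have hf_cont : Continuous fun x : E d => p x / Real.sqrt (1 + ‖x‖ ^ 2) :=
    hp_cont.div hsqrt_cont fun x => (hsqrt_pos x).ne'
  have hf_nonneg : ∀ x : E d, 0 ≤ p x / Real.sqrt (1 + ‖x‖ ^ 2) := fun x =>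
    div_nonneg (hp_pos x).le (hsqrt_pos x).le
  have hint : Integrable (fun x => p x / Real.sqrt (1 + ‖x‖ ^ 2)) volume := by
    refine hint_p.mono hf_cont.aestronglyMeasurable (Filter.Eventually.of_forall fun x => ?_)
    rw [Real.norm_eq_abs, Real.norm_eq_abs, abs_of_nonneg (hf_nonneg x), abs_of_pos (hp_pos x)]
    exact div_le_self (hp_pos x).le (hsqrt_ge x)
  refine ⟨hint, ?_, ?_, ?_, ?_⟩
  · -- positivity of the normalizing constant
    rw [integral_pos_iff_support_of_nonneg_ae (Filter.Eventually.of_forall hf_nonneg) hint]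
    have hsupp : Function.support (fun x : E d => p x / Real.sqrt (1 + ‖x‖ ^ 2)) = Set.univ := by
      ext x
      simp only [Function.mem_support, Set.mem_univ, iff_true]
      exact ne_of_gt (div_pos (hp_pos x) (hsqrt_pos x))
    rw [hsupp]
    exact isOpen_univ.measure_pos volume ⟨0, Set.mem_univ 0⟩
  · -- gradient formula
    intro x
    have hfuneq : (fun z : E d => Real.log (p z / Real.sqrt (1 + ‖z‖ ^ 2)))
        = fun z => Real.log (p z) - 2⁻¹ * Real.log (1 + ‖z‖ ^ 2) := by
      funext z
      have h0 : (0:ℝ) < 1 + ‖z‖ ^ 2 := by positivity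
      rw [Real.log_div (hp_pos z).ne' (Real.sqrt_ne_zero'.mpr h0), Real.log_sqrt h0.le]; ring
    rw [hfuneq]
    have hx0 : (0:ℝ) < 1 + ‖x‖ ^ 2 := by positivity
    have hdiff_p : DifferentiableAt ℝ p x := (hp_C1.differentiable one_ne_zero) x
    have hlogp : DifferentiableAt ℝ (fun z => Real.log (p z)) x := hdiff_p.log (hp_pos x).ne'
    have h1 : HasGradientAt (fun z => Real.log (p z)) (score p x) x := hlogp.hasGradientAt
    have hsq : HasFDerivAt (fun z : E d => 1 + ‖z‖ ^ 2) (2 • (innerSL ℝ x)) x := by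
      simpa using ((hasStrictFDerivAt_norm_sq x).hasFDerivAt.const_add 1)
    have hlog2 : HasDerivAt Real.log (1 + ‖x‖ ^ 2)⁻¹ (1 + ‖x‖ ^ 2) := Real.hasDerivAt_log hx0.ne'
    have hcomp : HasFDerivAt (fun z : E d => Real.log (1 + ‖z‖ ^ 2))
        ((1 + ‖x‖ ^ 2)⁻¹ • (2 • (innerSL ℝ x))) x := by have := hlog2.comp_hasFDerivAt x hsq; exact this
    have hdiv : HasFDerivAt (fun z : E d => 2⁻¹ * Real.log (1 + ‖z‖ ^ 2))
        ((2:ℝ)⁻¹ • ((1 + ‖x‖ ^ 2)⁻¹ • (2 • (innerSL ℝ x)))) x := hcomp.const_mul 2⁻¹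
    have h2 : HasGradientAt (fun z : E d => 2⁻¹ * Real.log (1 + ‖z‖ ^ 2))
        ((1 + ‖x‖ ^ 2)⁻¹ • x) x := by
      rw [hasGradientAt_iff_hasFDerivAt]
      refine hdiv.congr_fderiv ?_
      ext w
      simp [InnerProductSpace.toDual_apply_apply, real_inner_smul_left]
      ring
    have hsub := (hasGradientAt_iff_hasFDerivAt.mp h1).sub (hasGradientAt_iff_hasFDerivAt.mp h2)
    have hres : HasGradientAt (fun z => Real.log (p z) - 2⁻¹ * Real.log (1 + ‖z‖ ^ 2))
        (score p x - (1 + ‖x‖ ^ 2)⁻¹ • x) x := by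
      rw [hasGradientAt_iff_hasFDerivAt, map_sub]
      exact hsub
    exact hres.gradient
  · -- Lipschitz
    obtain ⟨-, L, hL0, hlip⟩ := hPP
    refine ⟨L + 3, by linarith, fun x y => ?_⟩
    have h1 : (score p x - (1 + ‖x‖ ^ 2)⁻¹ • x) - (score p y - (1 + ‖y‖ ^ 2)⁻¹ • y)
        = (score p x - score p y) - ((1 + ‖x‖ ^ 2)⁻¹ • x - (1 + ‖y‖ ^ 2)⁻¹ • y) := by abel
    rw [h1]
    refine (norm_sub_le _ _).trans ?_
    have := phi_lip x y
    have := hlip x y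
    linarith
  · -- distant dissipativity
    obtain ⟨hdd, L, hL0, hlip⟩ := hPP
    have hlip3 : ∀ x y : E d,
        ‖(score p x - (1 + ‖x‖ ^ 2)⁻¹ • x) - (score p y - (1 + ‖y‖ ^ 2)⁻¹ • y)‖
          ≤ (L + 3) * ‖x - y‖ := by
      intro x y
      have h1 : (score p x - (1 + ‖x‖ ^ 2)⁻¹ • x) - (score p y - (1 + ‖y‖ ^ 2)⁻¹ • y)
          = (score p x - score p y) - ((1 + ‖x‖ ^ 2)⁻¹ • x - (1 + ‖y‖ ^ 2)⁻¹ • y) := by abel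
      rw [h1]
      refine (norm_sub_le _ _).trans ?_
      have := phi_lip x y
      have := hlip x y
      linarith
    rw [DistantlyDissipative]
    set κ := liminf (fun r => kappaFn (score p) r) atTop with hκ
    have hκpos : 0 < κ := hdd
    have hbdd : IsBoundedUnder (· ≥ ·) atTop (fun r => kappaFn (score p) r) :=
      ⟨-(2 * L), Filter.eventually_map.mpr (Eventually.of_forall fun r =>
        (abs_le.mp (kappa_abs_bound hL0 hlip r)).1)⟩
    have hev := eventually_lt_of_lt_liminf (show κ / 2 < κ by linarith) hbdd
    have hub : IsBoundedUnder (· ≤ ·) atTop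
        (fun r => kappaFn (fun x => score p x - (1 + ‖x‖ ^ 2)⁻¹ • x) r) :=
      ⟨2 * (L + 3), Filter.eventually_map.mpr (Eventually.of_forall fun r =>
        (abs_le.mp (kappa_abs_bound (by linarith) hlip3 r)).2)⟩
    refine lt_of_lt_of_le (show (0:ℝ) < κ / 4 by linarith)
      (le_liminf_of_le hub.isCoboundedUnder_ge ?_)
    filter_upwards [hev, eventually_ge_atTop (max 1 (8 / κ))] with r h1 h2
    have hr1 : (1:ℝ) ≤ r := le_trans (le_max_left _ _) h2
    have hr8 : 8 / κ ≤ r := le_trans (le_max_right _ _) h2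
    have hr0 : (0:ℝ) < r := by linarith
    have h2r : 2 / r ≤ κ / 4 := by
      rw [div_le_div_iff₀ hr0 (by norm_num)]
      have : κ * (8 / κ) ≤ κ * r := mul_le_mul_of_nonneg_left hr8 hκpos.le
      rw [mul_div_cancel₀ _ hκpos.ne'] at this
      linarith
    have := kappa_compare hL0 hlip hr0
    linarith
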